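/- Let H be an n×n symmetric positive definite matrix and set Θ = I − e^{−H}. Let X = (X_t)_{t∈ℤ} be a centred, square-integrable strictly stationary n-dimensional process satisfying Δ_t X = −Θ X_{t−1} + Δ_t G for all t ∈ ℤ, where G_0 = 0. With γ(t) = E[X_t X_0ᵀ], v(t) = E[G_t G_tᵀ], B_t = Σ_{k=1}^t (γ(k−1) − γ(k)ᵀ), C_t = Σ_{k=1}^t Σ_{j=1}^t γ(k−j), and D_t = v(t) − 2γ(0) + γ(t) + γ(t)ᵀ, the continuous-time algebraic Riccati equation B_tᵀ Θ + Θ B_t − Θ C_t Θ + D_t = 0 holds for every t ∈ ℕ. -/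

import Mathlib

set_option autoImplicit false

open MeasureTheory Filter Finset Matrix Topology

variable {Ω : Type*}

/-- Two `ℤ`-indexed `ℝⁿ`-valued processes have the same finite-dimensional
distributions. -/
def SameFDD {n : ℕ} [MeasurableSpace Ω] (μ : Measure Ω)
    (X Y : ℤ → Ω → (Fin n → ℝ)) : Prop :=
  ∀ (m : ℕ) (t : Fin m → ℤ),
    μ.map (fun ω (i : Fin m) => X (t i) ω) = μ.map (fun ω (i : Fin m) => Y (t i) ω)

/-- Strict stationarity of a `ℤ`-indexed process. -/
def IsStationaryProcess {n : ℕ} [MeasurableSpace Ω] (μ : Measure Ω)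
    (X : ℤ → Ω → (Fin n → ℝ)) : Prop :=
  ∀ s : ℤ, SameFDD μ (fun t => X (t + s)) X

/-- Stationarity of increments of a `ℤ`-indexed process. -/
def HasStationaryIncrements {n : ℕ} [MeasurableSpace Ω] (μ : Measure Ω)
    (G : ℤ → Ω → (Fin n → ℝ)) : Prop :=
  ∀ s : ℤ, SameFDD μ (fun t ω => G (t + s) ω - G s ω) (fun t ω => G t ω - G 0 ω)

/-- The matrix exponential `e^{tH}` for an integer `t`. -/
noncomputable def zexp {n : ℕ} (H : Matrix (Fin n) (Fin n) ℝ) (t : ℤ) :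
    Matrix (Fin n) (Fin n) ℝ :=
  NormedSpace.exp ((t : ℝ) • H)

/-- The partial sum `Σ_{k=l}^0 e^{kH} Δ_k G`. -/
noncomputable def partialSumG {n : ℕ} (H : Matrix (Fin n) (Fin n) ℝ)
    (G : ℤ → Ω → (Fin n → ℝ)) (l : ℤ) (ω : Ω) : Fin n → ℝ :=
  ∑ k ∈ Finset.Icc l 0, (zexp H k).mulVec (G k ω - G (k - 1) ω)

/-- `G ∈ 𝒢_H` : `G` is a stationary-increment process starting from `0` whose partial
sums `Σ_{k=l}^0 e^{kH} Δ_k G` converge in probability as `l → −∞`. -/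
def MemG {n : ℕ} [MeasurableSpace Ω] (μ : Measure Ω) (H : Matrix (Fin n) (Fin n) ℝ)
    (G : ℤ → Ω → (Fin n → ℝ)) : Prop :=
  (∀ ω, G 0 ω = 0) ∧ HasStationaryIncrements μ G ∧
    ∃ ξ : Ω → (Fin n → ℝ), TendstoInMeasure μ (fun l => partialSumG H G l) Filter.atBot ξ

section Aux
variable {Ω : Type*} [MeasurableSpace Ω] {μ : MeasureTheory.Measure Ω} {n : ℕ}

variable {Ω : Type*} [MeasurableSpace Ω] {μ : Measure Ω} {n : ℕ}

lemma l2_integrable_mul {f g : Ω → ℝ} (hf : MemLp f 2 μ) (hg : MemLp g 2 μ) :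
    Integrable (fun ω => f ω * g ω) μ := by
  rw [← memLp_one_iff_integrable]
  have h := MemLp.smul (E := ℝ) (𝕜 := ℝ) (p := 2) (q := 2) (r := 1) hg hf
  exact h

noncomputable def covM (μ : Measure Ω) (u w : Ω → Fin n → ℝ) : Matrix (Fin n) (Fin n) ℝ :=
  Matrix.of fun i j => ∫ ω, u ω i * w ω j ∂μ

def L2V (μ : Measure Ω) (u : Ω → Fin n → ℝ) : Prop :=
  ∀ i, MemLp (fun ω => u ω i) 2 μ

lemma L2V.sub {u w : Ω → Fin n → ℝ} (hu : L2V μ u) (hw : L2V μ w) :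
    L2V μ (fun ω => u ω - w ω) := fun i => by
  exact (hu i).sub (hw i)

lemma L2V.add {u w : Ω → Fin n → ℝ} (hu : L2V μ u) (hw : L2V μ w) :
    L2V μ (fun ω => u ω + w ω) := fun i => by
  exact (hu i).add (hw i)

lemma L2V.sum {ι : Type*} {s : Finset ι} {u : ι → Ω → Fin n → ℝ}
    (hu : ∀ k ∈ s, L2V μ (u k)) : L2V μ (fun ω => ∑ k ∈ s, u k ω) := fun i => by
  have h := memLp_finset_sum' s fun k hk => hu k hk i
  rw [show (∑ k ∈ s, fun ω => u k ω i) = fun ω => ∑ k ∈ s, u k ω i from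
    funext fun ω => by simp] at h
  simpa using h

lemma L2V.mulVec {u : Ω → Fin n → ℝ} (A : Matrix (Fin n) (Fin n) ℝ) (hu : L2V μ u) :
    L2V μ (fun ω => A.mulVec (u ω)) := fun i => by
  simp only [Matrix.mulVec, dotProduct]
  have h := memLp_finset_sum' Finset.univ
    fun m (_ : m ∈ Finset.univ) => (hu m).const_mul (A i m)
  rw [show (∑ m : Fin n, fun ω => A i m * u ω m) = fun ω => ∑ m : Fin n, A i m * u ω m from
    funext fun ω => by simp] at h
  exact h

lemma covM_transpose (u w : Ω → Fin n → ℝ) : (covM μ u w)ᵀ = covM μ w u := by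
  ext i j
  simp only [covM, Matrix.transpose_apply, Matrix.of_apply]
  congr 1; ext ω; ring

lemma covM_sub_left {u u' w : Ω → Fin n → ℝ} (hu : L2V μ u) (hu' : L2V μ u')
    (hw : L2V μ w) :
    covM μ (fun ω => u ω - u' ω) w = covM μ u w - covM μ u' w := by
  ext i j
  simp only [covM, Matrix.sub_apply, Matrix.of_apply, Pi.sub_apply, sub_mul]
  exact integral_sub (l2_integrable_mul (hu i) (hw j)) (l2_integrable_mul (hu' i) (hw j))

lemma covM_sub_right {u w w' : Ω → Fin n → ℝ} (hu : L2V μ u) (hw : L2V μ w)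
    (hw' : L2V μ w') :
    covM μ u (fun ω => w ω - w' ω) = covM μ u w - covM μ u w' := by
  ext i j
  simp only [covM, Matrix.sub_apply, Matrix.of_apply, Pi.sub_apply, mul_sub]
  exact integral_sub (l2_integrable_mul (hu i) (hw j)) (l2_integrable_mul (hu i) (hw' j))

lemma covM_add_left {u u' w : Ω → Fin n → ℝ} (hu : L2V μ u) (hu' : L2V μ u')
    (hw : L2V μ w) :
    covM μ (fun ω => u ω + u' ω) w = covM μ u w + covM μ u' w := by
  ext i j
  simp only [covM, Matrix.add_apply, Matrix.of_apply, Pi.add_apply, add_mul]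
  exact integral_add (l2_integrable_mul (hu i) (hw j)) (l2_integrable_mul (hu' i) (hw j))

lemma covM_add_right {u w w' : Ω → Fin n → ℝ} (hu : L2V μ u) (hw : L2V μ w)
    (hw' : L2V μ w') :
    covM μ u (fun ω => w ω + w' ω) = covM μ u w + covM μ u w' := by
  ext i j
  simp only [covM, Matrix.add_apply, Matrix.of_apply, Pi.add_apply, mul_add]
  exact integral_add (l2_integrable_mul (hu i) (hw j)) (l2_integrable_mul (hu i) (hw' j))

lemma covM_sum_left {ι : Type*} {s : Finset ι} {u : ι → Ω → Fin n → ℝ}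
    {w : Ω → Fin n → ℝ} (hu : ∀ k ∈ s, L2V μ (u k)) (hw : L2V μ w) :
    covM μ (fun ω => ∑ k ∈ s, u k ω) w = ∑ k ∈ s, covM μ (u k) w := by
  ext i j
  simp only [covM, Matrix.of_apply, Finset.sum_apply, Finset.sum_mul, Matrix.sum_apply]
  exact integral_finset_sum s fun k hk => l2_integrable_mul (hu k hk i) (hw j)

lemma covM_sum_right {ι : Type*} {s : Finset ι} {u : Ω → Fin n → ℝ}
    {w : ι → Ω → Fin n → ℝ} (hu : L2V μ u) (hw : ∀ k ∈ s, L2V μ (w k)) :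
    covM μ u (fun ω => ∑ k ∈ s, w k ω) = ∑ k ∈ s, covM μ u (w k) := by
  ext i j
  simp only [covM, Matrix.of_apply, Finset.sum_apply, Finset.mul_sum, Matrix.sum_apply]
  exact integral_finset_sum s fun k hk => l2_integrable_mul (hu i) (hw k hk j)

lemma covM_mulVec_left {u w : Ω → Fin n → ℝ} (A : Matrix (Fin n) (Fin n) ℝ)
    (hu : L2V μ u) (hw : L2V μ w) :
    covM μ (fun ω => A.mulVec (u ω)) w = A * covM μ u w := by
  ext i j
  simp only [covM, Matrix.of_apply, Matrix.mul_apply, Matrix.mulVec, dotProduct,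
    Finset.sum_mul]
  rw [integral_finset_sum]
  · refine Finset.sum_congr rfl fun m _ => ?_
    simp_rw [mul_assoc]
    rw [integral_const_mul]
  · intro m _
    simpa [mul_assoc] using (l2_integrable_mul (hu m) (hw j)).const_mul (A i m)

lemma covM_mulVec_right {u w : Ω → Fin n → ℝ} (A : Matrix (Fin n) (Fin n) ℝ)
    (hu : L2V μ u) (hw : L2V μ w) :
    covM μ u (fun ω => A.mulVec (w ω)) = covM μ u w * Aᵀ := by
  ext i j
  simp only [covM, Matrix.of_apply, Matrix.mul_apply, Matrix.transpose_apply,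
    Matrix.mulVec, dotProduct, Finset.mul_sum]
  rw [integral_finset_sum]
  · refine Finset.sum_congr rfl fun m _ => ?_
    have : ∀ ω, u ω i * (A j m * w ω m) = A j m * (u ω i * w ω m) := fun ω => by ring
    simp_rw [this]
    rw [integral_const_mul]
    ring
  · intro m _
    have : ∀ ω, u ω i * (A j m * w ω m) = A j m * (u ω i * w ω m) := fun ω => by ring
    simp_rw [this]
    exact (l2_integrable_mul (hu i) (hw m)).const_mul (A j m)

end Aux

/-- for a centred square-integrable strictly stationary `X`
satisfying `Δ_t X = −Θ X_{t−1} + Δ_t G` with `Θ = I − e^{−H}` and `G_0 = 0`, the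
matrices `B_t = Σ_{k=1}^t (γ(k−1) − γ(k)ᵀ)`, `C_t = Σ_{k=1}^t Σ_{j=1}^t γ(k−j)`
and `D_t = v(t) − 2γ(0) + γ(t) + γ(t)ᵀ` satisfy the algebraic Riccati equation
`B_tᵀ Θ + Θ B_t − Θ C_t Θ + D_t = 0` for every `t ∈ ℕ`. -/
theorem stmt10 {n : ℕ} [MeasurableSpace Ω] (μ : Measure Ω) [IsProbabilityMeasure μ]
    (H : Matrix (Fin n) (Fin n) ℝ) (hH : H.PosDef)
    (Θ : Matrix (Fin n) (Fin n) ℝ)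
    (hΘ : Θ = (1 : Matrix (Fin n) (Fin n) ℝ) - NormedSpace.exp (-H))
    (X G : ℤ → Ω → (Fin n → ℝ))
    (hmX : ∀ t, Measurable (X t))
    (hX : IsStationaryProcess μ X)
    (hcent : ∀ (t : ℤ) (i : Fin n), ∫ ω, X t ω i ∂μ = 0)
    (hL2X : ∀ (t : ℤ) (i : Fin n), MemLp (fun ω => X t ω i) 2 μ)
    (hG0 : ∀ ω, G 0 ω = 0)
    (heq : ∀ (t : ℤ) (ω : Ω), X t ω - X (t - 1) ω =
      -Θ.mulVec (X (t - 1) ω) + (G t ω - G (t - 1) ω))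
    (γ v : ℤ → Matrix (Fin n) (Fin n) ℝ)
    (hγ : ∀ t : ℤ, γ t = Matrix.of fun i j => ∫ ω, X t ω i * X 0 ω j ∂μ)
    (hv : ∀ t : ℤ, v t = Matrix.of fun i j => ∫ ω, G t ω i * G t ω j ∂μ)
    (B C D : ℕ → Matrix (Fin n) (Fin n) ℝ)
    (hB : ∀ t : ℕ, B t = ∑ k ∈ Finset.Icc (1 : ℤ) t, (γ (k - 1) - (γ k)ᵀ))
    (hC : ∀ t : ℕ, C t = ∑ k ∈ Finset.Icc (1 : ℤ) t, ∑ j ∈ Finset.Icc (1 : ℤ) t, γ (k - j))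
    (hD : ∀ t : ℕ, D t = v t - (2 : ℝ) • γ 0 + γ t + (γ t)ᵀ) :
    ∀ t : ℕ, (B t)ᵀ * Θ + Θ * B t - Θ * C t * Θ + D t = 0 := by
  intro t
  have hL2 : ∀ a : ℤ, L2V μ (X a) := fun a i => hL2X a i
  -- stationarity of the covariance
  have hshift : ∀ a b s : ℤ, covM μ (X (a + s)) (X (b + s)) = covM μ (X a) (X b) := by
    intro a b s
    ext i j
    have key := hX s 2 ![a, b]
    have hφm : Measurable fun y : Fin 2 → Fin n → ℝ => y 0 i * y 1 j :=
      Measurable.mul (f := fun y : Fin 2 → Fin n → ℝ => y 0 i) (g := fun y : Fin 2 → Fin n → ℝ => y 1 j)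
        ((measurable_pi_apply i).comp (measurable_pi_apply 0)) ((measurable_pi_apply j).comp (measurable_pi_apply 1))
    have hF1 : Measurable fun ω (k : Fin 2) => X (![a, b] k + s) ω :=
      measurable_pi_lambda _ fun k => hmX _
    have hF2 : Measurable fun ω (k : Fin 2) => X (![a, b] k) ω :=
      measurable_pi_lambda _ fun k => hmX _
    show (∫ ω, X (a + s) ω i * X (b + s) ω j ∂μ) = ∫ ω, X a ω i * X b ω j ∂μ
    calc ∫ ω, X (a + s) ω i * X (b + s) ω j ∂μ
        = ∫ y, y 0 i * y 1 j ∂(μ.map fun ω (k : Fin 2) => X (![a, b] k + s) ω) := by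
          rw [integral_map hF1.aemeasurable hφm.aestronglyMeasurable]
          simp
      _ = ∫ y, y 0 i * y 1 j ∂(μ.map fun ω (k : Fin 2) => X (![a, b] k) ω) := by rw [key]
      _ = ∫ ω, X a ω i * X b ω j ∂μ := by
          rw [integral_map hF2.aemeasurable hφm.aestronglyMeasurable]
          simp
  have hγcov : ∀ s : ℤ, γ s = covM μ (X s) (X 0) := fun s => by rw [hγ]; rfl
  have hcov_shift : ∀ a b : ℤ, covM μ (X a) (X b) = γ (a - b) := by
    intro a b
    rw [hγcov]
    have h := hshift (a - b) 0 b
    rw [zero_add, sub_add_cancel] at h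
    exact h
  have hcovT : ∀ a b : ℤ, (covM μ (X a) (X b))ᵀ = covM μ (X b) (X a) :=
    fun a b => covM_transpose _ _
  have hHT : Hᵀ = H := by
    have := hH.isHermitian
    rwa [Matrix.IsHermitian, Matrix.conjTranspose_eq_transpose_of_trivial] at this
  have hΘT : Θᵀ = Θ := by
    rw [hΘ, Matrix.transpose_sub, Matrix.transpose_one, ← Matrix.exp_transpose,
      Matrix.transpose_neg, hHT]
  -- explicit formula for G on naturals
  have hGt : ∀ (m : ℕ) (ω : Ω), G (m : ℤ) ω =
      X (m : ℤ) ω - X 0 ω + Θ.mulVec (∑ k ∈ Finset.Icc (1 : ℤ) (m : ℤ), X (k - 1) ω) := by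
    intro m
    induction m with
    | zero =>
      intro ω
      have hempty : Finset.Icc (1 : ℤ) ((0 : ℕ) : ℤ) = ∅ := by decide
      simp [hG0 ω, hempty]
    | succ m ih =>
      intro ω
      have h1 := heq ((m : ℤ) + 1) ω
      rw [show (m : ℤ) + 1 - 1 = (m : ℤ) by ring] at h1
      have h2 : G ((m : ℤ) + 1) ω =
          G (m : ℤ) ω + (X ((m : ℤ) + 1) ω - X (m : ℤ) ω) + Θ.mulVec (X (m : ℤ) ω) := by
        have hx : G ((m : ℤ) + 1) ω - G (m : ℤ) ω
            = X ((m : ℤ) + 1) ω - X (m : ℤ) ω + Θ.mulVec (X (m : ℤ) ω) := by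
          rw [h1]; abel
        rw [sub_eq_iff_eq_add.mp hx]; abel
      have hins : Finset.Icc (1 : ℤ) ((m : ℤ) + 1) = insert ((m : ℤ) + 1) (Finset.Icc 1 (m : ℤ)) := by
        ext x
        simp only [Finset.mem_Icc, Finset.mem_insert]
        omega
      have hcast : (((m + 1 : ℕ)) : ℤ) = (m : ℤ) + 1 := by push_cast; ring
      rw [hcast, h2, ih ω, hins, Finset.sum_insert (by simp), Matrix.mulVec_add,
        show (m : ℤ) + 1 - 1 = (m : ℤ) by ring]
      abel
  -- L2 facts
  have hSL2 : L2V μ (fun ω => ∑ k ∈ Finset.Icc (1 : ℤ) (t : ℤ), X (k - 1) ω) :=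
    L2V.sum fun k _ => hL2 _
  have hPL2 : L2V μ (fun ω => X (t : ℤ) ω - X 0 ω) := L2V.sub (hL2 _) (hL2 0)
  have hQL2 : L2V μ (fun ω => Θ.mulVec (∑ k ∈ Finset.Icc (1 : ℤ) (t : ℤ), X (k - 1) ω)) :=
    L2V.mulVec Θ hSL2
  have hGfun : G ((t : ℕ) : ℤ) = fun ω =>
      (X (t : ℤ) ω - X 0 ω) + Θ.mulVec (∑ k ∈ Finset.Icc (1 : ℤ) (t : ℤ), X (k - 1) ω) :=
    funext fun ω => hGt t ω
  have hvt : v (t : ℤ) = covM μ (G (t : ℤ)) (G (t : ℤ)) := by rw [hv]; rfl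
  -- the four blocks
  have e1 : covM μ (fun ω => X (t : ℤ) ω - X 0 ω) (fun ω => X (t : ℤ) ω - X 0 ω) =
      covM μ (X (t : ℤ)) (X (t : ℤ)) - covM μ (X (t : ℤ)) (X 0) -
        (covM μ (X 0) (X (t : ℤ)) - covM μ (X 0) (X 0)) := by
    rw [covM_sub_left (hL2 _) (hL2 0) hPL2, covM_sub_right (hL2 _) (hL2 _) (hL2 0),
      covM_sub_right (hL2 0) (hL2 _) (hL2 0)]
  have e2 : covM μ (fun ω => X (t : ℤ) ω - X 0 ω)
      (fun ω => Θ.mulVec (∑ k ∈ Finset.Icc (1 : ℤ) (t : ℤ), X (k - 1) ω)) =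
      ((∑ k ∈ Finset.Icc (1 : ℤ) (t : ℤ), covM μ (X (t : ℤ)) (X (k - 1))) -
        ∑ k ∈ Finset.Icc (1 : ℤ) (t : ℤ), covM μ (X 0) (X (k - 1))) * Θᵀ := by
    rw [covM_mulVec_right Θ hPL2 hSL2, covM_sub_left (hL2 _) (hL2 0) hSL2,
      covM_sum_right (hL2 _) (fun k _ => hL2 _), covM_sum_right (hL2 0) (fun k _ => hL2 _)]
  have e3 : covM μ (fun ω => Θ.mulVec (∑ k ∈ Finset.Icc (1 : ℤ) (t : ℤ), X (k - 1) ω))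
      (fun ω => X (t : ℤ) ω - X 0 ω) =
      Θ * ((∑ k ∈ Finset.Icc (1 : ℤ) (t : ℤ), covM μ (X (k - 1)) (X (t : ℤ))) -
        ∑ k ∈ Finset.Icc (1 : ℤ) (t : ℤ), covM μ (X (k - 1)) (X 0)) := by
    rw [covM_mulVec_left Θ hSL2 hPL2, covM_sub_right hSL2 (hL2 _) (hL2 0),
      covM_sum_left (fun k _ => hL2 _) (hL2 _), covM_sum_left (fun k _ => hL2 _) (hL2 0)]
  have e4 : covM μ (fun ω => Θ.mulVec (∑ k ∈ Finset.Icc (1 : ℤ) (t : ℤ), X (k - 1) ω))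
      (fun ω => Θ.mulVec (∑ k ∈ Finset.Icc (1 : ℤ) (t : ℤ), X (k - 1) ω)) =
      Θ * ((∑ k ∈ Finset.Icc (1 : ℤ) (t : ℤ), ∑ j ∈ Finset.Icc (1 : ℤ) (t : ℤ),
        covM μ (X (k - 1)) (X (j - 1))) * Θᵀ) := by
    rw [covM_mulVec_left Θ hSL2 hQL2, covM_mulVec_right Θ hSL2 hSL2,
      covM_sum_left (fun k _ => hL2 _) hSL2,
      Finset.sum_congr rfl fun k _ => covM_sum_right (hL2 _) (fun j _ => hL2 _)]
  -- sum reindexing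
  have hsum1 : ∑ k ∈ Finset.Icc (1 : ℤ) (t : ℤ), covM μ (X (t : ℤ)) (X (k - 1)) =
      ∑ k ∈ Finset.Icc (1 : ℤ) (t : ℤ), covM μ (X k) (X 0) := by
    have h1 : ∀ k : ℤ, covM μ (X (t : ℤ)) (X (k - 1)) = covM μ (X ((t : ℤ) + 1 - k)) (X 0) := by
      intro k
      have h := hshift ((t : ℤ) + 1 - k) 0 (k - 1)
      rw [zero_add, show (t : ℤ) + 1 - k + (k - 1) = (t : ℤ) by ring] at h
      exact h
    rw [Finset.sum_congr rfl fun k _ => h1 k]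
    refine Finset.sum_nbij' (fun k => (t : ℤ) + 1 - k) (fun k => (t : ℤ) + 1 - k) ?_ ?_ ?_ ?_ ?_
    · intro a ha; simp only [Finset.mem_Icc] at *; omega
    · intro a ha; simp only [Finset.mem_Icc] at *; omega
    · intro a _; ring
    · intro a _; ring
    · intro a _; rfl
  have hsum2 : ∑ k ∈ Finset.Icc (1 : ℤ) (t : ℤ), covM μ (X (k - 1)) (X (t : ℤ)) =
      ∑ k ∈ Finset.Icc (1 : ℤ) (t : ℤ), covM μ (X 0) (X k) := by
    have h1 : ∀ k : ℤ, covM μ (X (k - 1)) (X (t : ℤ)) = covM μ (X 0) (X ((t : ℤ) + 1 - k)) := by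
      intro k
      have h := hshift 0 ((t : ℤ) + 1 - k) (k - 1)
      rw [zero_add, show (t : ℤ) + 1 - k + (k - 1) = (t : ℤ) by ring] at h
      exact h
    rw [Finset.sum_congr rfl fun k _ => h1 k]
    refine Finset.sum_nbij' (fun k => (t : ℤ) + 1 - k) (fun k => (t : ℤ) + 1 - k) ?_ ?_ ?_ ?_ ?_
    · intro a ha; simp only [Finset.mem_Icc] at *; omega
    · intro a ha; simp only [Finset.mem_Icc] at *; omega
    · intro a _; ring
    · intro a _; ring
    · intro a _; rfl
  have hsum3 : ∑ k ∈ Finset.Icc (1 : ℤ) (t : ℤ), ∑ j ∈ Finset.Icc (1 : ℤ) (t : ℤ),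
      covM μ (X (k - 1)) (X (j - 1)) = C t := by
    rw [hC]
    refine Finset.sum_congr rfl fun k _ => Finset.sum_congr rfl fun j _ => ?_
    rw [hcov_shift]
    congr 1
    ring
  have hΓtt : covM μ (X (t : ℤ)) (X (t : ℤ)) = covM μ (X 0) (X 0) := by
    have h := hshift 0 0 (t : ℤ)
    rwa [zero_add] at h
  -- B in covariance form
  have hBcov : B t = (∑ k ∈ Finset.Icc (1 : ℤ) (t : ℤ), covM μ (X (k - 1)) (X 0)) -
      ∑ k ∈ Finset.Icc (1 : ℤ) (t : ℤ), covM μ (X 0) (X k) := by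
    rw [hB, Finset.sum_sub_distrib]
    congr 1
    · exact Finset.sum_congr rfl fun k _ => by rw [hγcov]
    · exact Finset.sum_congr rfl fun k _ => by rw [hγcov, hcovT]
  have hBT : (B t)ᵀ = (∑ k ∈ Finset.Icc (1 : ℤ) (t : ℤ), covM μ (X 0) (X (k - 1))) -
      ∑ k ∈ Finset.Icc (1 : ℤ) (t : ℤ), covM μ (X k) (X 0) := by
    rw [hBcov, Matrix.transpose_sub, Matrix.transpose_sum, Matrix.transpose_sum]
    congr 1
    · exact Finset.sum_congr rfl fun k _ => hcovT _ _
    · exact Finset.sum_congr rfl fun k _ => hcovT _ _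
  -- final assembly
  rw [hD t, hvt, hGfun, covM_add_left hPL2 hQL2 (L2V.add hPL2 hQL2),
    covM_add_right hPL2 hPL2 hQL2, covM_add_right hQL2 hPL2 hQL2,
    e1, e2, e3, e4, hΘT, hΓtt, hsum1, hsum2, hsum3, hBT, hBcov,
    hγcov (0 : ℤ), hγcov ((t : ℕ) : ℤ), hcovT]
  rw [two_smul]
  noncomm_ring
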